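/- Let P : ℝⁿ → ℝ ∪ {∞} be proper closed convex, f : ℝⁿ → ℝ differentiable with L-Lipschitz gradient, γ ∈ (0, 1/L), and let F_γ(x) = inf_y { f(y) + P(y) + D_φ(y,x) } with φ(x) = ‖x‖²/(2γ) − f(x). If f + P is coercive (i.e., liminf_{‖x‖→∞} (f+P)(x)/‖x‖ > 0), then F_γ is level bounded, i.e., all sublevel sets {x : F_γ(x) ≤ c} are bounded. -/

import Mathlib

open RealInnerProductSpace Filter Topology

variable {n : ℕ}

lemma inner_gradient_eq (f : EuclideanSpace ℝ (Fin n) → ℝ) (x v : EuclideanSpace ℝ (Fin n)) :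
    ⟪gradient f x, v⟫ = fderiv ℝ f x v := by
  rw [gradient, InnerProductSpace.toDual_symm_apply]

lemma seg_integral (f : EuclideanSpace ℝ (Fin n) → ℝ) (hf : Differentiable ℝ f)
    (hg : Continuous (fun x => gradient f x)) (x y : EuclideanSpace ℝ (Fin n)) :
    f y - f x = ∫ t in (0:ℝ)..1, ⟪gradient f (x + t • (y - x)), y - x⟫ := by
  set v := y - x with hv
  have key : ∀ t : ℝ, HasDerivAt (fun t : ℝ => f (x + t • v))
      (⟪gradient f (x + t • v), v⟫) t := by
    intro t
    have hline : HasDerivAt (fun t : ℝ => x + t • v) v t := by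
      simpa using ((hasDerivAt_id t).smul_const v).const_add x
    have h2 := ((hf (x + t • v)).hasFDerivAt).comp_hasDerivAt t hline
    rw [inner_gradient_eq]
    exact h2
  have hint : IntervalIntegrable (fun t : ℝ => ⟪gradient f (x + t • v), v⟫)
      MeasureTheory.volume 0 1 := by
    apply Continuous.intervalIntegrable
    exact (hg.comp (by continuity)).inner continuous_const
  have := intervalIntegral.integral_eq_sub_of_hasDerivAt
    (fun t _ => key t) hint
  simp only [one_smul, zero_smul, add_zero] at this
  rw [this]
  simp [hv]

lemma descent (f : EuclideanSpace ℝ (Fin n) → ℝ) {L : ℝ} (hL : 0 ≤ L)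
    (hf : Differentiable ℝ f)
    (hlip : LipschitzWith (Real.toNNReal L) (fun x => gradient f x))
    (x y : EuclideanSpace ℝ (Fin n)) :
    f y - f x - ⟪gradient f x, y - x⟫ ≤ L / 2 * ‖y - x‖ ^ 2 := by
  set v := y - x with hv
  have hg : Continuous (fun x => gradient f x) := hlip.continuous
  have hseg := seg_integral f hf hg x y
  rw [← hv] at hseg
  have hc1 : Continuous (fun t : ℝ => ⟪gradient f (x + t • v), v⟫) :=
    (hg.comp (by continuity)).inner continuous_const
  have hconst : (⟪gradient f x, v⟫ : ℝ) = ∫ t in (0:ℝ)..1, ⟪gradient f x, v⟫ := by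
    simp
  have key : (∫ t in (0:ℝ)..1, (⟪gradient f (x + t • v), v⟫ - ⟪gradient f x, v⟫))
      ≤ ∫ t in (0:ℝ)..1, L * t * ‖v‖ ^ 2 := by
    apply intervalIntegral.integral_mono_on (by norm_num)
    · exact (hc1.sub continuous_const).intervalIntegrable _ _
    · exact (by continuity : Continuous fun t : ℝ => L * t * ‖v‖ ^ 2).intervalIntegrable _ _
    · intro t ht
      rcases ht with ⟨ht0, ht1⟩
      calc ⟪gradient f (x + t • v), v⟫ - ⟪gradient f x, v⟫
          = ⟪gradient f (x + t • v) - gradient f x, v⟫ := by rw [inner_sub_left]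
        _ ≤ ‖gradient f (x + t • v) - gradient f x‖ * ‖v‖ := real_inner_le_norm _ _
        _ ≤ (L * (t * ‖v‖)) * ‖v‖ := by
            apply mul_le_mul_of_nonneg_right _ (norm_nonneg _)
            have := hlip.dist_le_mul (x + t • v) x
            rw [dist_eq_norm] at this
            simpa [norm_smul, abs_of_nonneg ht0, Real.coe_toNNReal L hL, dist_eq_norm,
              mul_assoc] using this
        _ = L * t * ‖v‖ ^ 2 := by ring
  have hval : (∫ t in (0:ℝ)..1, L * t * ‖v‖ ^ 2) = L / 2 * ‖v‖ ^ 2 := by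
    rw [show (fun t : ℝ => L * t * ‖v‖ ^ 2) = fun t : ℝ => (L * ‖v‖ ^ 2) * t by
      funext t; ring]
    rw [intervalIntegral.integral_const_mul, integral_id]
    ring
  have hsplit : (∫ t in (0:ℝ)..1, (⟪gradient f (x + t • v), v⟫ - ⟪gradient f x, v⟫))
      = (∫ t in (0:ℝ)..1, ⟪gradient f (x + t • v), v⟫) - ⟪gradient f x, v⟫ := by
    rw [intervalIntegral.integral_sub (hc1.intervalIntegrable _ _)
      intervalIntegrable_const]
    simp
  rw [hsplit, ← hseg] at key
  linarith [key, hval]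

lemma grad_phi (f φ : EuclideanSpace ℝ (Fin n) → ℝ) {γ : ℝ} (hγ : 0 < γ)
    (hfd : Differentiable ℝ f)
    (hφ : ∀ x, φ x = ‖x‖ ^ 2 / (2 * γ) - f x) (x w : EuclideanSpace ℝ (Fin n)) :
    ⟪gradient φ x, w⟫ = ⟪x, w⟫ / γ - ⟪gradient f x, w⟫ := by
  have hF : HasFDerivAt φ (((2 * γ)⁻¹ • (2 • innerSL ℝ x)) - fderiv ℝ f x) x := by
    have h1 := (hasStrictFDerivAt_norm_sq x).hasFDerivAt
    have h2 := (hfd x).hasFDerivAt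
    have h3 := (h1.const_smul ((2 * γ)⁻¹)).sub h2
    have : φ = fun z => (2 * γ)⁻¹ • ‖z‖ ^ 2 - f z := by
      funext z; rw [hφ z]; simp [smul_eq_mul, div_eq_inv_mul]
    rw [this]
    exact h3
  rw [inner_gradient_eq, inner_gradient_eq, hF.fderiv]
  simp only [ContinuousLinearMap.sub_apply, ContinuousLinearMap.smul_apply,
    ContinuousLinearMap.smul_apply, two_smul, ContinuousLinearMap.add_apply,
    innerSL_apply_apply, smul_eq_mul]
  have : (2 * γ)⁻¹ * (⟪x, w⟫ + ⟪x, w⟫) = ⟪x, w⟫ / γ := by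
    field_simp; ring
  rw [this]

lemma bregman_lb (f φ : EuclideanSpace ℝ (Fin n) → ℝ) {L γ : ℝ} (hL : 0 ≤ L) (hγ : 0 < γ)
    (hfd : Differentiable ℝ f)
    (hlip : LipschitzWith (Real.toNNReal L) (fun x => gradient f x))
    (hφ : ∀ x, φ x = ‖x‖ ^ 2 / (2 * γ) - f x) (x y : EuclideanSpace ℝ (Fin n)) :
    (1 / (2 * γ) - L / 2) * ‖y - x‖ ^ 2 ≤ φ y - φ x - ⟪gradient φ x, y - x⟫ := by
  have hdes := descent f hL hfd hlip x y
  rw [hφ y, hφ x, grad_phi f φ hγ hfd hφ x (y - x)]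
  have hns : ‖y - x‖ ^ 2 = ‖y‖ ^ 2 - 2 * ⟪y, x⟫ + ‖x‖ ^ 2 := by
    rw [@norm_sub_sq_real]
  have hinner : ⟪x, y - x⟫ = ⟪y, x⟫ - ‖x‖ ^ 2 := by
    rw [inner_sub_right, real_inner_self_eq_norm_sq, real_inner_comm]
  have hquad : ‖y‖ ^ 2 / (2 * γ) - ‖x‖ ^ 2 / (2 * γ) - (⟪y, x⟫ - ‖x‖ ^ 2) / γ
      = ‖y - x‖ ^ 2 / (2 * γ) := by
    rw [hns]; field_simp; ring
  have e1 : (1 / (2 * γ) - L / 2) * ‖y - x‖ ^ 2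
      = ‖y - x‖ ^ 2 / (2 * γ) - L / 2 * ‖y - x‖ ^ 2 := by ring
  rw [hinner]
  linarith [hdes, hquad, e1]

lemma lsc_lb (P : EuclideanSpace ℝ (Fin n) → EReal) (hPnb : ∀ x, P x ≠ ⊥)
    (hPlsc : LowerSemicontinuous P) (K : Set (EuclideanSpace ℝ (Fin n))) (hK : IsCompact K) :
    ∃ m : ℝ, ∀ y ∈ K, (m : EReal) ≤ P y := by
  choose r hr1 hr2 using fun y => EReal.exists_between_coe_real ((hPnb y).bot_lt)
  have hU : ∀ y ∈ K, {z | (r y : EReal) < P z} ∈ 𝓝 y := fun y _ => hPlsc y (r y) (hr2 y)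
  obtain ⟨t, htK, hcov⟩ := hK.elim_nhds_subcover _ hU
  by_cases ht : t.Nonempty
  · refine ⟨t.inf' ht r, fun y hy => ?_⟩
    obtain ⟨z, hz⟩ := Set.mem_iUnion₂.1 (hcov hy)
    refine le_trans ?_ (le_of_lt hz.2)
    exact_mod_cast EReal.coe_le_coe_iff.mpr (Finset.inf'_le r hz.1)
  · refine ⟨0, fun y hy => ?_⟩
    obtain ⟨z, hz⟩ := Set.mem_iUnion₂.1 (hcov hy)
    exact absurd ⟨z, hz.1⟩ ht

lemma coer_lb (f : EuclideanSpace ℝ (Fin n) → ℝ) (P : EuclideanSpace ℝ (Fin n) → EReal)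
    (hfc : Continuous f) (hPnb : ∀ x, P x ≠ ⊥) (hPlsc : LowerSemicontinuous P)
    (hcoer : 0 < liminf (fun x => ((f x : EReal) + P x) * ((‖x‖⁻¹ : ℝ) : EReal))
      (Bornology.cobounded (EuclideanSpace ℝ (Fin n)))) :
    ∃ ε : ℝ, 0 < ε ∧ ∃ b : ℝ, ∀ y, (↑(ε * ‖y‖ - b) : EReal) ≤ (f y : EReal) + P y := by
  obtain ⟨ε, hε0, hεlim⟩ := EReal.exists_between_coe_real hcoer
  have hε : (0 : ℝ) < ε := by exact_mod_cast hε0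
  have hev := eventually_lt_of_lt_liminf hεlim
  rw [Filter.eventually_iff] at hev
  have hbdd : Bornology.IsBounded
      {x : EuclideanSpace ℝ (Fin n) |
        (ε : EReal) < ((f x : EReal) + P x) * ((‖x‖⁻¹ : ℝ) : EReal)}ᶜ :=
    Bornology.isBounded_compl_iff.mpr hev
  obtain ⟨R, hR⟩ := isBounded_iff_forall_norm_le.mp hbdd
  set R' := max R 0 with hR'
  have hfar : ∀ y : EuclideanSpace ℝ (Fin n), R' < ‖y‖ →
      (↑(ε * ‖y‖) : EReal) ≤ (f y : EReal) + P y := by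
    intro y hy
    have hyS : (ε : EReal) < ((f y : EReal) + P y) * ((‖y‖⁻¹ : ℝ) : EReal) := by
      by_contra h
      have := hR y h
      have : ‖y‖ ≤ R' := le_trans this (le_max_left _ _)
      linarith
    have hny : (0 : ℝ) < ‖y‖ := lt_of_le_of_lt (le_max_right R 0) hy
    rcases eq_top_or_lt_top (P y) with hPt | hPt
    · rw [hPt, EReal.coe_add_top]
      exact le_top
    · set q := P y with hq
      lift q to ℝ using ⟨ne_of_lt hPt, hPnb y⟩ with p hp
      rw [← EReal.coe_add, ← EReal.coe_mul, EReal.coe_lt_coe_iff] at hyS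
      rw [← EReal.coe_add, EReal.coe_le_coe_iff]
      have := (lt_div_iff₀ hny).mp (by rwa [div_eq_mul_inv])
      linarith
  -- lower bound on the ball
  have hKc : IsCompact (Metric.closedBall (0 : EuclideanSpace ℝ (Fin n)) R') :=
    isCompact_closedBall _ _
  obtain ⟨m₂, hm₂⟩ := lsc_lb P hPnb hPlsc _ hKc
  obtain ⟨z, hz, hzmin'⟩ := hKc.exists_isMinOn
    ⟨0, Metric.mem_closedBall_self (le_max_right R 0)⟩ hfc.continuousOn
  have hzmin := isMinOn_iff.mp hzmin'
  set m₁ := f z with hm₁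
  refine ⟨ε, hε, ε * R' - min (m₁ + m₂) 0, fun y => ?_⟩
  by_cases hyb : ‖y‖ ≤ R'
  · have h1 : (↑(m₁ + m₂) : EReal) ≤ (f y : EReal) + P y := by
      rw [EReal.coe_add]
      exact add_le_add (EReal.coe_le_coe_iff.mpr
        (hzmin y (mem_closedBall_zero_iff.mpr hyb)))
        (hm₂ y (mem_closedBall_zero_iff.mpr hyb))
    refine le_trans ?_ h1
    rw [EReal.coe_le_coe_iff]
    have : ε * ‖y‖ ≤ ε * R' := by
      apply mul_le_mul_of_nonneg_left hyb (le_of_lt hε)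
    have := min_le_left (m₁ + m₂) 0
    linarith [min_le_left (m₁ + m₂) (0:ℝ)]
  · push_neg at hyb
    refine le_trans ?_ (hfar y hyb)
    rw [EReal.coe_le_coe_iff]
    have h0 : 0 ≤ ε * R' := mul_nonneg (le_of_lt hε) (le_max_right R 0)
    linarith [min_le_right (m₁ + m₂) (0:ℝ)]

/-- If f + P is coercive and γ ∈ (0, 1/L), then the forward-backward envelope
F_γ(x) = inf_y { f(y) + P(y) + D_φ(y,x) }, with φ(x) = ‖x‖²/(2γ) − f(x),
is level bounded. -/
theorem stmt1 {n : ℕ} (f φ : EuclideanSpace ℝ (Fin n) → ℝ)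
    (P : EuclideanSpace ℝ (Fin n) → EReal)
    (L γ : ℝ) (hL : 0 < L) (hγ : 0 < γ) (hγL : γ < 1 / L)
    (hf : ContDiff ℝ 2 f)
    (hlip : LipschitzWith (Real.toNNReal L) (fun x => gradient f x))
    -- P is proper
    (hPne : ∃ x, P x ≠ ⊤) (hPnb : ∀ x, P x ≠ ⊥)
    -- P is closed
    (hPlsc : LowerSemicontinuous P)
    -- P is convex
    (hPconv : ∀ x y : EuclideanSpace ℝ (Fin n), ∀ a b : ℝ, 0 ≤ a → 0 ≤ b → a + b = 1 →
      P (a • x + b • y) ≤ (a : EReal) * P x + (b : EReal) * P y)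
    -- φ(x) = ‖x‖²/(2γ) − f(x)
    (hφ : ∀ x, φ x = ‖x‖ ^ 2 / (2 * γ) - f x)
    -- the forward-backward envelope
    (Fγ : EuclideanSpace ℝ (Fin n) → EReal)
    (hFγ : ∀ x, Fγ x = ⨅ y, ((f y : EReal) + P y +
      ((φ y - φ x - ⟪gradient φ x, y - x⟫ : ℝ) : EReal)))
    -- f + P is coercive: liminf_{‖x‖→∞} (f+P)(x)/‖x‖ > 0
    (hcoer : 0 < liminf (fun x => ((f x : EReal) + P x) * ((‖x‖⁻¹ : ℝ) : EReal))
      (Bornology.cobounded (EuclideanSpace ℝ (Fin n)))) :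
    -- F_γ is level bounded
    ∀ c : ℝ, Bornology.IsBounded {x : EuclideanSpace ℝ (Fin n) | Fγ x ≤ (c : EReal)} := by
  intro c
  have hfd : Differentiable ℝ f := hf.differentiable (by norm_num)
  obtain ⟨ε, hε, b, hlb⟩ := coer_lb f P hf.continuous hPnb hPlsc hcoer
  obtain ⟨α, hα⟩ : ∃ α : ℝ, α = 1 / (2 * γ) - L / 2 := ⟨_, rfl⟩
  have hα0 : 0 < α := by
    rw [hα]
    have h1 : γ * L < 1 := by
      have := (lt_div_iff₀ hL).mp hγL
      linarith
    have h2 : L < 1 / γ := by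
      rw [lt_div_iff₀ hγ]; linarith [mul_comm γ L]
    have h3 : 1 / (2 * γ) = (1 / γ) / 2 := by field_simp
    linarith
  -- key lower bound on Fγ
  have hFlb : ∀ x : EuclideanSpace ℝ (Fin n),
      (↑(min (ε * ‖x‖ / 2) (α * ‖x‖ ^ 2 / 4) - b) : EReal) ≤ Fγ x := by
    intro x
    rw [hFγ x]
    refine le_iInf fun y => ?_
    have hD : α * ‖y - x‖ ^ 2 ≤ φ y - φ x - ⟪gradient φ x, y - x⟫ := by
      have := bregman_lb f φ (le_of_lt hL) hγ hfd hlip hφ x y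
      rw [hα]; exact this
    have hminle : min (ε * ‖x‖ / 2) (α * ‖x‖ ^ 2 / 4) ≤ ε * ‖y‖ + α * ‖y - x‖ ^ 2 := by
      rcases le_or_gt (‖x‖ / 2) ‖y‖ with h | h
      · refine le_trans (min_le_left _ _) ?_
        have h1 := mul_le_mul_of_nonneg_left h hε.le
        have h2 := mul_nonneg hα0.le (sq_nonneg ‖y - x‖)
        linarith
      · refine le_trans (min_le_right _ _) ?_
        have hxy : ‖x‖ / 2 ≤ ‖y - x‖ := by
          have h1 : ‖x‖ - ‖y‖ ≤ ‖x - y‖ := norm_sub_norm_le x y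
          have h2 : ‖x - y‖ = ‖y - x‖ := norm_sub_rev x y
          linarith
        have hsq : (‖x‖ / 2) ^ 2 ≤ ‖y - x‖ ^ 2 :=
          pow_le_pow_left₀ (by positivity) hxy 2
        have h1 := mul_le_mul_of_nonneg_left hsq hα0.le
        have e : α * (‖x‖ / 2) ^ 2 = α * ‖x‖ ^ 2 / 4 := by ring
        have h2 := mul_nonneg hε.le (norm_nonneg y)
        linarith
    calc (↑(min (ε * ‖x‖ / 2) (α * ‖x‖ ^ 2 / 4) - b) : EReal)
        ≤ (↑(ε * ‖y‖ - b + (φ y - φ x - ⟪gradient φ x, y - x⟫)) : EReal) := by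
          rw [EReal.coe_le_coe_iff]
          linarith [hminle.trans (add_le_add_right hD (ε * ‖y‖))]
      _ = (↑(ε * ‖y‖ - b) : EReal) + (↑(φ y - φ x - ⟪gradient φ x, y - x⟫) : EReal) := by
          rw [EReal.coe_add]
      _ ≤ ((f y : EReal) + P y) + (↑(φ y - φ x - ⟪gradient φ x, y - x⟫) : EReal) := by
          exact add_le_add_left (hlb y) _
  -- conclude
  obtain ⟨K, hK⟩ : ∃ K : ℝ, K = max (c + b) 0 + 1 := ⟨_, rfl⟩
  have hK0 : 0 < K := by rw [hK]; positivity
  obtain ⟨M, hM⟩ : ∃ M : ℝ, M = max (2 * K / ε) (Real.sqrt (4 * K / α)) := ⟨_, rfl⟩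
  apply Bornology.IsBounded.subset (Metric.isBounded_closedBall (x := (0 : EuclideanSpace ℝ (Fin n))) (r := M))
  intro x hx
  rw [Metric.mem_closedBall, dist_zero_right]
  by_contra h
  push_neg at h
  rw [hM] at h
  have h1 : K ≤ ε * ‖x‖ / 2 := by
    have : 2 * K / ε < ‖x‖ := lt_of_le_of_lt (le_max_left _ _) h
    rw [div_lt_iff₀ hε] at this
    linarith
  have h2 : K ≤ α * ‖x‖ ^ 2 / 4 := by
    have hs : Real.sqrt (4 * K / α) < ‖x‖ := lt_of_le_of_lt (le_max_right _ _) h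
    have hnn : (0 : ℝ) ≤ 4 * K / α := by positivity
    have : 4 * K / α < ‖x‖ ^ 2 := by
      have := Real.sq_sqrt hnn
      nlinarith [Real.sqrt_nonneg (4 * K / α)]
    rw [div_lt_iff₀ hα0] at this
    nlinarith [this]
  have hcon : (↑(min (ε * ‖x‖ / 2) (α * ‖x‖ ^ 2 / 4) - b) : EReal) ≤ (c : EReal) :=
    le_trans (hFlb x) hx
  rw [EReal.coe_le_coe_iff] at hcon
  have : K ≤ min (ε * ‖x‖ / 2) (α * ‖x‖ ^ 2 / 4) := le_min h1 h2
  have : c + b < K := by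
    rw [hK]; have := le_max_left (c + b) 0; linarith
  linarith [le_min h1 h2]
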